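/- The elements Ẽ_{ij} defined above satisfy [Ẽ_{ij}, Ẽ_{kl}] = M (g_{ik} Ẽ_{jl} + g_{jl} Ẽ_{ik} − g_{il} Ẽ_{jk} − g_{jk} Ẽ_{il}) in the enveloping algebra of Gal_ℓ(p,q); i.e. they generate a virtual copy of so(p,q). -/

import Mathlib

/-- The element `Ẽ_{ij} = M E_{ij} + Σ_{s=0}^{ℓ-1/2}
((-1)^{(2ℓ-1)/2+s}/(s!(2ℓ-s)!)) (P_{s,i}P_{2ℓ-s,j} - P_{s,j}P_{2ℓ-s,i})`
of the enveloping algebra of `Gal_ℓ(p,q)`, with `ℓ = t + 1/2`. -/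
noncomputable def Etilde (A : Type) [Ring A] [Algebra ℝ A] {d : ℕ} (t : ℕ)
    (XM : A) (XE : Fin d → Fin d → A) (XP : ℕ → Fin d → A) (i j : Fin d) : A :=
  XM * XE i j + ∑ s ∈ Finset.range (t + 1),
    ((-1 : ℝ) ^ (t + s) / (s.factorial * (2 * t + 1 - s).factorial)) •
      (XP s i * XP (2 * t + 1 - s) j - XP s j * XP (2 * t + 1 - s) i)

set_option maxHeartbeats 4000000 in
/-- The elements `Ẽ_{ij}` satisfy
`[Ẽ_{ij}, Ẽ_{kl}] = M (g_{ik} Ẽ_{jl} + g_{jl} Ẽ_{ik} - g_{il} Ẽ_{jk} - g_{jk} Ẽ_{il})`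
in the enveloping algebra of `Gal_ℓ(p,q)`; i.e. they generate a virtual copy of
`so(p,q)`. -/
theorem stmt9 (A : Type) [Ring A] [Algebra ℝ A] (d t p' q' : ℕ) (hd : 3 ≤ d)
    (hpq : p' + q' = d)
    (XM : A) (XE : Fin d → Fin d → A) (XP : ℕ → Fin d → A)
    (gm : Fin d → ℝ) (hgm : ∀ i, gm i = if (i : ℕ) < p' then 1 else -1)
    (hXP0 : ∀ n, 2 * t + 1 < n → ∀ i, XP n i = 0)
    (hEanti : ∀ i j, XE i j = - XE j i)
    (hEE : ∀ i j k l : Fin d,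
      ⁅XE i j, XE k l⁆ = (if i = k then gm i else 0) • XE j l
        + (if j = l then gm j else 0) • XE i k
        - (if i = l then gm i else 0) • XE j k
        - (if j = k then gm j else 0) • XE i l)
    (hEP : ∀ (i j : Fin d) (n : ℕ), n ≤ 2 * t + 1 → ∀ k,
      ⁅XE i j, XP n k⁆ = (if k = i then gm i else 0) • XP n j
        - (if k = j then gm j else 0) • XP n i)
    (hPP : ∀ m ≤ 2 * t + 1, ∀ n ≤ 2 * t + 1, ∀ i j,
      ⁅XP m i, XP n j⁆ =
        (if i = j ∧ m + n = 2 * t + 1 then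
          gm i * (-1 : ℝ) ^ (m + t + 1) * (2 * t + 1 - m).factorial * m.factorial
        else 0) • XM)
    (hM : ∀ a : A, ⁅XM, a⁆ = 0) :
    ∀ i j k l : Fin d,
      ⁅Etilde A t XM XE XP i j, Etilde A t XM XE XP k l⁆ =
        XM * ((if i = k then gm i else 0) • Etilde A t XM XE XP j l
          + (if j = l then gm j else 0) • Etilde A t XM XE XP i k
          - (if i = l then gm i else 0) • Etilde A t XM XE XP j k
          - (if j = k then gm j else 0) • Etilde A t XM XE XP i l) := by
  letI : LieRing A := LieRing.ofAssociativeRing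
  -- centrality of `XM`
  have hcm : ∀ a : A, XM * a = a * XM := by
    intro a; have h := hM a; rw [Ring.lie_def, sub_eq_zero] at h; exact h
  have hre : ∀ x y : A, x * XM * y = XM * (x * y) := by
    intro x y; rw [← hcm x, mul_assoc]
  have lieMl : ∀ x y : A, ⁅XM * x, y⁆ = XM * ⁅x, y⁆ := by
    intro x y
    simp only [Ring.lie_def, mul_sub]
    rw [← mul_assoc y, ← hcm y, mul_assoc, mul_assoc]
  have lieMr : ∀ x y : A, ⁅x, XM * y⁆ = XM * ⁅x, y⁆ := by
    intro x y
    simp only [Ring.lie_def, mul_sub]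
    rw [← mul_assoc x, ← hcm x, mul_assoc, mul_assoc]
  have lieMM : ∀ x y : A, ⁅XM * x, XM * y⁆ = XM * (XM * ⁅x, y⁆) := by
    intro x y; rw [lieMl, lieMr]
  have lieMul : ∀ x y z : A, ⁅x, y * z⁆ = ⁅x, y⁆ * z + y * ⁅x, z⁆ := by
    intro x y z; simp only [Ring.lie_def]; noncomm_ring
  have lie4 : ∀ x1 x2 y1 y2 : A, ⁅x1 * x2, y1 * y2⁆ =
      x1 * ⁅x2, y1⁆ * y2 + x1 * y1 * ⁅x2, y2⁆ + ⁅x1, y1⁆ * y2 * x2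
        + y1 * ⁅x1, y2⁆ * x2 := by
    intro x1 x2 y1 y2; simp only [Ring.lie_def]; noncomm_ring
  have lieSum : ∀ (x : A) (f : ℕ → A) (F : Finset ℕ),
      ⁅x, ∑ s ∈ F, f s⁆ = ∑ s ∈ F, ⁅x, f s⁆ := by
    intro x f F
    simp only [Ring.lie_def, Finset.mul_sum, Finset.sum_mul, ← Finset.sum_sub_distrib]
  have sumLie : ∀ (f : ℕ → A) (F : Finset ℕ) (x : A),
      ⁅∑ s ∈ F, f s, x⁆ = ∑ s ∈ F, ⁅f s, x⁆ := by
    intro f F x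
    simp only [Ring.lie_def, Finset.mul_sum, Finset.sum_mul, ← Finset.sum_sub_distrib]
  -- if-scalar flips
  have flip : ∀ (a b : Fin d) (r : ℝ), (if a = b then r else 0) = (if b = a then r else 0) := by
    intro a b r
    by_cases h : a = b
    · subst h; rfl
    · rw [if_neg h, if_neg (Ne.symm h)]
  have swap : ∀ a b : Fin d, (if a = b then gm a else 0) = (if b = a then gm b else 0) := by
    intro a b
    by_cases h : a = b
    · subst h; rfl
    · rw [if_neg h, if_neg (Ne.symm h)]
  have hEP' : ∀ (a b : Fin d) (n : ℕ), n ≤ 2 * t + 1 → ∀ m,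
      ⁅XE a b, XP n m⁆ = (if a = m then gm a else 0) • XP n b
        - (if b = m then gm b else 0) • XP n a := by
    intro a b n hn m
    rw [hEP a b n hn m, flip m a (gm a), flip m b (gm b)]
  -- abbreviations
  set c : ℕ → ℝ := fun s => ((-1 : ℝ) ^ (t + s) / (s.factorial * (2 * t + 1 - s).factorial))
    with hc
  set κ : ℕ → ℝ := fun s =>
    (-1 : ℝ) ^ (t + s) * s.factorial * (2 * t + 1 - s).factorial with hκ
  set S : Fin d → Fin d → A := fun a b => ∑ s ∈ Finset.range (t + 1),
    c s • (XP s a * XP (2 * t + 1 - s) b - XP s b * XP (2 * t + 1 - s) a) with hS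
  have hEt : ∀ a b, Etilde A t XM XE XP a b = XM * XE a b + S a b := by
    intro a b; rw [hS, Etilde]
  have hcne : ∀ s : ℕ, c s ≠ 0 := by
    intro s
    rw [hc]
    apply div_ne_zero
    · exact pow_ne_zero _ (by norm_num)
    · positivity
  have hκc : ∀ s : ℕ, κ s = (c s)⁻¹ := by
    intro s
    have h1 : ((s.factorial : ℝ) * (2 * t + 1 - s).factorial) ≠ 0 := by positivity
    have e1 : (-1 : ℝ) ^ (t + s) * (-1 : ℝ) ^ (t + s) = 1 := by
      rw [← pow_add, ← two_mul, pow_mul, neg_one_sq, one_pow]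
    apply eq_inv_of_mul_eq_one_left
    rw [hκ, hc]
    field_simp
    linear_combination e1
  -- momentum bracket lemmas
  have hzero1 : ∀ s < t + 1, ∀ r < t + 1, ∀ a b : Fin d, ⁅XP s a, XP r b⁆ = 0 := by
    intro s hs r hr a b
    rw [hPP s (by omega) r (by omega), if_neg, zero_smul]
    rintro ⟨-, h⟩; omega
  have hzero2 : ∀ s < t + 1, ∀ r < t + 1, ∀ a b : Fin d,
      ⁅XP (2 * t + 1 - s) a, XP (2 * t + 1 - r) b⁆ = 0 := by
    intro s hs r hr a b
    rw [hPP (2 * t + 1 - s) (by omega) (2 * t + 1 - r) (by omega), if_neg, zero_smul]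
    rintro ⟨-, h⟩; omega
  have ha : ∀ s < t + 1, ∀ r < t + 1, ∀ a b : Fin d,
      ⁅XP s a, XP (2 * t + 1 - r) b⁆ =
        -((if a = b ∧ s = r then gm a * κ s else 0) • XM) := by
    intro s hs r hr a b
    rw [hPP s (by omega) (2 * t + 1 - r) (by omega)]
    by_cases hab : a = b ∧ s = r
    · rw [if_pos ⟨hab.1, by omega⟩, if_pos hab, ← neg_smul]
      congr 1
      obtain ⟨h1, h2⟩ := hab
      subst h2
      rw [show s + t + 1 = (t + s) + 1 from by omega, pow_succ, hκ]
      ring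
    · rw [if_neg, if_neg hab, zero_smul, neg_zero]
      rintro ⟨u1, u2⟩; exact hab ⟨u1, by omega⟩
  have hb : ∀ s < t + 1, ∀ r < t + 1, ∀ a b : Fin d,
      ⁅XP (2 * t + 1 - s) a, XP r b⁆ =
        (if a = b ∧ s = r then gm a * κ s else 0) • XM := by
    intro s hs r hr a b
    rw [hPP (2 * t + 1 - s) (by omega) r (by omega)]
    by_cases hab : a = b ∧ s = r
    · rw [if_pos ⟨hab.1, by omega⟩, if_pos hab]
      congr 1
      obtain ⟨h1, h2⟩ := hab
      subst h2
      rw [show 2 * t + 1 - (2 * t + 1 - s) = s from by omega,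
        show 2 * t + 1 - s + t + 1 = (t + s) + 2 * (t + 1 - s) from by omega,
        pow_add, pow_mul, neg_one_sq, one_pow, mul_one, hκ]
      ring
    · rw [if_neg, if_neg hab, zero_smul]
      rintro ⟨u1, u2⟩; exact hab ⟨u1, by omega⟩
  have key : ∀ s < t + 1, ∀ r < t + 1, ∀ a b e f : Fin d,
      ⁅XP s a * XP (2 * t + 1 - s) b, XP r e * XP (2 * t + 1 - r) f⁆ =
        (if b = e ∧ s = r then gm b * κ s else 0) •
            (XM * (XP s a * XP (2 * t + 1 - r) f))
          - (if a = f ∧ s = r then gm a * κ s else 0) •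
            (XM * (XP r e * XP (2 * t + 1 - s) b)) := by
    intro s hs r hr a b e f
    rw [lie4, hb s hs r hr b e, ha s hs r hr a f, hzero1 s hs r hr a e,
      hzero2 s hs r hr b f]
    simp only [mul_zero, zero_mul, add_zero, zero_add, mul_neg, neg_mul,
      mul_smul_comm, smul_mul_assoc, hre]
    abel
  have keyS : ∀ s < t + 1, ∀ i j k l : Fin d,
      ⁅c s • (XP s i * XP (2 * t + 1 - s) j - XP s j * XP (2 * t + 1 - s) i),
        c s • (XP s k * XP (2 * t + 1 - s) l - XP s l * XP (2 * t + 1 - s) k)⁆ =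
        (if j = k then gm j else 0) •
            (XM * (c s • (XP s i * XP (2 * t + 1 - s) l - XP s l * XP (2 * t + 1 - s) i)))
          + (if i = l then gm i else 0) •
            (XM * (c s • (XP s j * XP (2 * t + 1 - s) k - XP s k * XP (2 * t + 1 - s) j)))
          - (if j = l then gm j else 0) •
            (XM * (c s • (XP s i * XP (2 * t + 1 - s) k - XP s k * XP (2 * t + 1 - s) i)))
          - (if i = k then gm i else 0) •
            (XM * (c s • (XP s j * XP (2 * t + 1 - s) l - XP s l * XP (2 * t + 1 - s) j))) := by
    intro s hs i j k l
    have hc0 := hcne s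
    rw [smul_lie, lie_smul, lie_sub, sub_lie, sub_lie,
      key s hs s hs i j k l, key s hs s hs i j l k,
      key s hs s hs j i k l, key s hs s hs j i l k]
    simp only [hκc s, and_true, eq_self_iff_true]
    obtain ⟨C, hC, hCne⟩ : ∃ C, c s = C ∧ C ≠ 0 := ⟨c s, rfl, hcne s⟩
    rw [hC]
    split_ifs <;> subst_vars <;>
      first
        | exact absurd rfl (by assumption)
        | (simp only [smul_sub, mul_sub, mul_smul_comm, smul_smul];
           match_scalars <;> field_simp <;> ring)
  have hoff : ∀ s < t + 1, ∀ r < t + 1, r ≠ s → ∀ i j k l : Fin d,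
      ⁅c s • (XP s i * XP (2 * t + 1 - s) j - XP s j * XP (2 * t + 1 - s) i),
        c r • (XP r k * XP (2 * t + 1 - r) l - XP r l * XP (2 * t + 1 - r) k)⁆ = 0 := by
    intro s hs r hr hne i j k l
    rw [smul_lie, lie_smul, lie_sub, sub_lie, sub_lie,
      key s hs r hr i j k l, key s hs r hr i j l k,
      key s hs r hr j i k l, key s hs r hr j i l k]
    simp [hne.symm]
  have hSS : ∀ i j k l : Fin d,
      ⁅S i j, S k l⁆ = (if j = k then gm j else 0) • (XM * S i l)
        + (if i = l then gm i else 0) • (XM * S j k)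
        - (if j = l then gm j else 0) • (XM * S i k)
        - (if i = k then gm i else 0) • (XM * S j l) := by
    intro i j k l
    rw [hS]
    simp only [Finset.mul_sum, Finset.smul_sum, ← Finset.sum_add_distrib,
      ← Finset.sum_sub_distrib, sumLie, lieSum]
    refine Finset.sum_congr rfl fun s hs => ?_
    have hs' := Finset.mem_range.mp hs
    rw [Finset.sum_eq_single_of_mem s hs
      (fun r hr hne => hoff s hs' r (Finset.mem_range.mp hr) hne i j k l)]
    exact keyS s hs' i j k l
  have hES : ∀ i j k l : Fin d,
      ⁅XE i j, S k l⁆ = (if i = k then gm i else 0) • S j l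
        + (if j = l then gm j else 0) • S i k
        - (if i = l then gm i else 0) • S j k
        - (if j = k then gm j else 0) • S i l := by
    intro i j k l
    rw [hS]
    simp only [lieSum, Finset.smul_sum, ← Finset.sum_add_distrib, ← Finset.sum_sub_distrib]
    refine Finset.sum_congr rfl fun s hs => ?_
    have hs' := Finset.mem_range.mp hs
    rw [lie_smul, lie_sub, lieMul, lieMul,
      hEP' i j s (by omega) k, hEP' i j (2 * t + 1 - s) (by omega) l,
      hEP' i j s (by omega) l, hEP' i j (2 * t + 1 - s) (by omega) k]
    simp only [sub_mul, mul_sub, smul_mul_assoc, mul_smul_comm, smul_sub, smul_smul]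
    module
  have hSanti : ∀ a b : Fin d, S a b = -S b a := by
    intro a b
    rw [hS, ← Finset.sum_neg_distrib]
    refine Finset.sum_congr rfl fun s _ => ?_
    rw [← smul_neg, neg_sub]
  have hESM : ∀ i j k l : Fin d,
      ⁅S i j, XM * XE k l⁆ = XM * ((if i = k then gm i else 0) • S j l
        + (if j = l then gm j else 0) • S i k
        - (if i = l then gm i else 0) • S j k
        - (if j = k then gm j else 0) • S i l) := by
    intro i j k l
    rw [← lie_skew, lieMl, hES k l i j, hSanti l j, hSanti k i, hSanti l i, hSanti k j,
      swap k i, swap l j, swap k j, swap l i]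
    simp only [smul_neg, mul_add, mul_sub, mul_neg, neg_add, neg_sub, neg_neg, sub_neg_eq_add]
    abel
  intro i j k l
  simp only [hEt]
  rw [add_lie, lie_add, lie_add, lieMM, lieMl, hEE i j k l, hES i j k l,
    hESM i j k l, hSS i j k l]
  simp only [mul_add, mul_sub, smul_add, smul_sub, mul_smul_comm]
  module
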